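/- Let m ≥ 1, let q > −1 be real, let u = (u_1,…,u_m) ∈ S^{m−1}, let i ∈ {1,…,m}, and let g = (g_1,…,g_m) be a standard Gaussian random vector in ℝ^m. Then E[ |⟨g,u⟩|^q · g_i² ] = (1 + q u_i²) · 2^{q/2} Γ((q+1)/2) / √π, i.e. it equals (1 + q u_i²) · E[|g_1|^q]. -/

import Mathlib

open MeasureTheory ProbabilityTheory Real
open scoped ENNReal NNReal

noncomputable section

namespace GaussAux

/-- the standard gaussian measure -/
abbrev γ : Measure ℝ := gaussianReal 0 1

lemma pdf_nonneg (x : ℝ) : 0 ≤ gaussianPDFReal 0 1 x := gaussianPDFReal_nonneg 0 1 x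

lemma pdf_eq (x : ℝ) : gaussianPDFReal 0 1 x = (√(2 * π))⁻¹ * rexp (-(1/2) * x ^ 2) := by
  simp only [gaussianPDFReal_def, NNReal.coe_one, mul_one, sub_zero]
  congr 1
  ring

lemma gauss_eq_withDensity :
    γ = volume.withDensity (fun x => ((gaussianPDFReal 0 1 x).toNNReal : ℝ≥0∞)) := by
  show gaussianReal 0 1 = _
  rw [gaussianReal_of_var_ne_zero 0 one_ne_zero]
  simp only [gaussianPDF_def, ENNReal.ofReal]

lemma integral_gauss (g : ℝ → ℝ) :
    ∫ x, g x ∂γ = ∫ x, gaussianPDFReal 0 1 x * g x := by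
  rw [gauss_eq_withDensity, integral_withDensity_eq_integral_smul
    ((measurable_gaussianPDFReal 0 1).real_toNNReal) g]
  congr 1 with x
  simp [NNReal.smul_def, Real.coe_toNNReal _ (pdf_nonneg x)]

lemma integrable_gauss_iff {g : ℝ → ℝ} :
    Integrable g γ ↔ Integrable (fun x => gaussianPDFReal 0 1 x * g x) volume := by
  rw [gauss_eq_withDensity, integrable_withDensity_iff_integrable_smul
    ((measurable_gaussianPDFReal 0 1).real_toNNReal)]
  constructor <;> intro h <;> refine h.congr (Filter.Eventually.of_forall fun x => ?_) <;>
    simp [NNReal.smul_def, Real.coe_toNNReal _ (pdf_nonneg x)]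

lemma pdf_even (x : ℝ) : gaussianPDFReal 0 1 (-x) = gaussianPDFReal 0 1 x := by
  simp [pdf_eq]

lemma pdf_abs (x : ℝ) : gaussianPDFReal 0 1 |x| = gaussianPDFReal 0 1 x := by
  rcases abs_choice x with h | h <;> rw [h]; exact pdf_even x

/-- integrability of |x|^r against the gaussian -/
lemma integrable_abs_rpow {r : ℝ} (hr : -1 < r) :
    Integrable (fun x : ℝ => |x| ^ r) γ := by
  rw [integrable_gauss_iff]
  have hIoi : IntegrableOn (fun x => gaussianPDFReal 0 1 x * |x| ^ r) (Set.Ioi 0) := by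
    refine IntegrableOn.congr_fun
      (((integrableOn_rpow_mul_exp_neg_mul_sq (by norm_num : (0:ℝ) < 1/2) hr).const_mul
      ((√(2 * π))⁻¹))) (fun x hx => ?_) measurableSet_Ioi
    rw [abs_of_pos hx, pdf_eq]
    ring
  have hIic : IntegrableOn (fun x => gaussianPDFReal 0 1 x * |x| ^ r) (Set.Iic 0) := by
    rw [← Measure.map_neg_eq_self (volume : Measure ℝ)]
    have m : MeasurableEmbedding fun x : ℝ => -x := (Homeomorph.neg ℝ).measurableEmbedding
    rw [m.integrableOn_map_iff]
    simp only [Function.comp_def, pdf_even, abs_neg]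
    have : (fun x : ℝ => -x) ⁻¹' Set.Iic 0 = Set.Ici 0 := by
      ext x; simp
    rw [this]
    exact (integrableOn_Ici_iff_integrableOn_Ioi (f := fun x => gaussianPDFReal 0 1 x * |x| ^ r)).mpr hIoi
  have := hIic.union hIoi
  rwa [Set.Iic_union_Ioi, integrableOn_univ] at this

/-- the absolute moment formula -/
lemma integral_abs_rpow {r : ℝ} (hr : -1 < r) :
    ∫ x, |x| ^ r ∂γ = 2 ^ (r / 2) * Real.Gamma ((r + 1) / 2) / Real.sqrt Real.pi := by
  rw [integral_gauss]
  have h1 : ∫ x : ℝ, gaussianPDFReal 0 1 x * |x| ^ r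
      = 2 * ∫ x in Set.Ioi (0:ℝ), gaussianPDFReal 0 1 x * x ^ r := by
    rw [show (fun x : ℝ => gaussianPDFReal 0 1 x * |x| ^ r)
      = fun x => gaussianPDFReal 0 1 |x| * |x| ^ r from funext fun x => by rw [pdf_abs]]
    exact integral_comp_abs (f := fun t => gaussianPDFReal 0 1 t * t ^ r)
  rw [h1]
  have h2 : ∫ x in Set.Ioi (0:ℝ), gaussianPDFReal 0 1 x * x ^ r
      = (√(2 * π))⁻¹ * ∫ x in Set.Ioi (0:ℝ), x ^ r * rexp (-(1/2) * x ^ (2:ℝ)) := by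
    rw [← integral_const_mul]
    refine setIntegral_congr_fun measurableSet_Ioi (fun x hx => ?_)
    rw [Real.rpow_two, pdf_eq]
    ring
  rw [h2, integral_rpow_mul_exp_neg_mul_rpow two_pos hr (by norm_num)]
  -- now pure algebra
  have e1 : ((1:ℝ)/2) ^ (-(r + 1) / 2) = 2 ^ ((r+1)/2) := by
    rw [one_div, Real.inv_rpow (by norm_num : (0:ℝ) ≤ 2),
      ← Real.rpow_neg (by norm_num : (0:ℝ) ≤ 2)]
    congr 1; ring
  have e2 : (2:ℝ) ^ ((r+1)/2) = 2 ^ (r/2) * 2 ^ ((1:ℝ)/2) := by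
    rw [← Real.rpow_add two_pos]; congr 1; ring
  have e3 : √(2 * π) = 2 ^ ((1:ℝ)/2) * √π := by
    rw [Real.sqrt_mul (by norm_num), Real.sqrt_eq_rpow]
  rw [e1, e2, e3]
  have h2half : (0:ℝ) < 2 ^ ((1:ℝ)/2) := rpow_pos_of_pos two_pos _
  have hπ : (0:ℝ) < √π := Real.sqrt_pos.mpr pi_pos
  field_simp


-- pointwise identities
lemma abs_rpow_mul_sq {q : ℝ} (hq : -1 < q) (x : ℝ) : |x| ^ q * x ^ 2 = |x| ^ (q + 2) := by
  rcases eq_or_ne x 0 with rfl | hx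
  · simp [Real.zero_rpow ((by linarith : (0:ℝ) < q + 2).ne')]
  · rw [Real.rpow_add (abs_pos.mpr hx), Real.rpow_two, sq_abs]

lemma abs_rpow_mul_self {q : ℝ} (hq : -1 < q) (x : ℝ) : |(|x| ^ q * x)| = |x| ^ (q + 1) := by
  rcases eq_or_ne x 0 with rfl | hx
  · simp [Real.zero_rpow ((by linarith : (0:ℝ) < q + 1).ne')]
  · rw [abs_mul, abs_of_nonneg (Real.rpow_nonneg (abs_nonneg x) q),
      Real.rpow_add (abs_pos.mpr hx), Real.rpow_one]

-- map of gaussian under neg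
lemma map_neg_gauss : Measure.map (fun x : ℝ => -x) γ = γ := by
  have := gaussianReal_map_const_mul (μ := 0) (v := 1) (-1)
  simp only [neg_mul, one_mul, mul_zero] at this
  rw [show NNReal.mk ((-1:ℝ)^2) (sq_nonneg _) * 1 = 1 by ext; norm_num] at this
  exact this

lemma integral_odd_eq_zero {f : ℝ → ℝ} (hodd : ∀ x, f (-x) = - f x)
    (hf : AEStronglyMeasurable f γ) : ∫ x, f x ∂γ = 0 := by
  have h1 : ∫ x, f x ∂γ = ∫ x, f (-x) ∂γ := by
    nth_rewrite 1 [← map_neg_gauss]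
    rw [integral_map measurable_neg.aemeasurable]
    rw [map_neg_gauss]; exact hf
  have h2 : ∫ x, f (-x) ∂γ = - ∫ x, f x ∂γ := by
    simp_rw [hodd]; exact integral_neg f
  linarith [h1, h2]

lemma integrable_abs_rpow_mul_self {r : ℝ} (hr : -1 < r) :
    Integrable (fun x : ℝ => |x| ^ r * x) γ := by
  refine (integrable_abs_rpow (r := r + 1) (by linarith)).mono' ?_ ?_
  · exact (((measurable_abs).pow_const r).mul measurable_id).aestronglyMeasurable
  · exact Filter.Eventually.of_forall fun x => by
      rw [Real.norm_eq_abs, abs_rpow_mul_self (by linarith)]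

lemma integral_abs_rpow_mul_self (r : ℝ) :
    ∫ x, |x| ^ r * x ∂γ = 0 := by
  refine integral_odd_eq_zero (fun x => by rw [abs_neg]; ring) ?_
  exact (((measurable_abs).pow_const r).mul measurable_id).aestronglyMeasurable

lemma integrable_id_gauss : Integrable (fun x : ℝ => x) γ := by
  refine (integrable_abs_rpow (r := 1) (by norm_num)).mono' ?_ ?_
  · exact measurable_id.aestronglyMeasurable
  · exact Filter.Eventually.of_forall fun x => by
      rw [Real.norm_eq_abs, Real.rpow_one]

lemma integral_id_gauss : ∫ x, x ∂γ = 0 :=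
  integral_odd_eq_zero (fun x => rfl) measurable_id.aestronglyMeasurable

lemma sq_eq_abs_rpow (x : ℝ) : x ^ 2 = |x| ^ (2:ℝ) := by
  rw [Real.rpow_two, sq_abs]

lemma integrable_sq_gauss : Integrable (fun x : ℝ => x ^ 2) γ := by
  refine ((integrable_abs_rpow (r := 2) (by norm_num)).congr ?_)
  exact Filter.Eventually.of_forall fun x => (sq_eq_abs_rpow x).symm

lemma integral_sq_gauss : ∫ x, x ^ 2 ∂γ = 1 := by
  simp_rw [sq_eq_abs_rpow]
  rw [integral_abs_rpow (by norm_num)]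
  rw [show ((2:ℝ) + 1)/2 = 1/2 + 1 by norm_num, Real.Gamma_add_one (by norm_num),
    Real.Gamma_one_half_eq]
  rw [show (2:ℝ)/2 = (1:ℝ) by norm_num, Real.rpow_one]
  have hπ : (0:ℝ) < √π := Real.sqrt_pos.mpr pi_pos
  field_simp

lemma integrable_abs_rpow_mul_sq {q : ℝ} (hq : -1 < q) :
    Integrable (fun x : ℝ => |x| ^ q * x ^ 2) γ := by
  refine ((integrable_abs_rpow (r := q + 2) (by linarith)).congr ?_)
  exact Filter.Eventually.of_forall fun x => (abs_rpow_mul_sq hq x).symm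

lemma gamma_ratio {q : ℝ} (hq : -1 < q) :
    2 ^ ((q + 2) / 2) * Real.Gamma ((q + 2 + 1) / 2) / √π
      = (q + 1) * (2 ^ (q / 2) * Real.Gamma ((q + 1) / 2) / √π) := by
  rw [show (q + 2 + 1)/2 = (q+1)/2 + 1 by ring, Real.Gamma_add_one (by linarith : (0:ℝ) < (q+1)/2).ne',
    show (q + 2)/2 = q/2 + 1 by ring, Real.rpow_add two_pos, Real.rpow_one]
  have hπ : (0:ℝ) < √π := Real.sqrt_pos.mpr pi_pos
  field_simp

lemma integral_abs_rpow_mul_sq {q : ℝ} (hq : -1 < q) :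
    ∫ x, |x| ^ q * x ^ 2 ∂γ
      = (q + 1) * (2 ^ (q / 2) * Real.Gamma ((q + 1) / 2) / √π) := by
  simp_rw [abs_rpow_mul_sq hq]
  rw [integral_abs_rpow (by linarith : (-1:ℝ) < q + 2), gamma_ratio hq]


/-- Fubini for products of nonneg functions over a finite pi measure -/
lemma lint_pi {n : ℕ} (μ : Fin n → Measure ℝ) [∀ i, SigmaFinite (μ i)]
    (f : Fin n → ℝ → ℝ≥0∞) (hf : ∀ i, Measurable (f i)) :
    ∫⁻ x, ∏ i, f i (x i) ∂Measure.pi μ = ∏ i, ∫⁻ x, f i x ∂μ i := by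
  induction n with
  | zero => simp [Measure.pi_of_empty]
  | succ n ih =>
    have hmg : Measurable fun y : Fin n → ℝ => ∏ i, f i.succ (y i) :=
      Finset.measurable_prod _ fun i _ => (hf i.succ).comp (measurable_pi_apply i)
    have hmeas : Measurable fun z : ℝ × (Fin n → ℝ) =>
        f 0 z.1 * ∏ i, f i.succ (z.2 i) :=
      ((hf 0).comp measurable_fst).mul (hmg.comp measurable_snd)
    have h := (measurePreserving_piFinSuccAbove μ 0).lintegral_comp hmeas
    have heq : ∀ x : Fin (n+1) → ℝ,
        (fun z : ℝ × (Fin n → ℝ) => f 0 z.1 * ∏ i, f i.succ (z.2 i))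
          ((MeasurableEquiv.piFinSuccAbove (fun _ => ℝ) 0) x)
          = ∏ i, f i (x i) := by
      intro x
      simp only [MeasurableEquiv.piFinSuccAbove_apply, Fin.insertNthEquiv_symm_apply,
        Fin.removeNth_zero]
      rw [Fin.prod_univ_succ]
      rfl
    simp_rw [heq] at h
    simp only [Fin.zero_succAbove] at h
    refine h.trans (Eq.trans (lintegral_prod_mul ((hf 0).aemeasurable) hmg.aemeasurable) ?_)
    rw [ih _ (fun i => f i.succ) (fun i => hf i.succ), Fin.prod_univ_succ]

/-- the pi gaussian as a density against Lebesgue -/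
lemma pi_gauss_withDensity (m : ℕ) :
    (Measure.pi fun _ : Fin m => γ)
      = (volume : Measure (Fin m → ℝ)).withDensity
          (fun x => ∏ j, ENNReal.ofReal (gaussianPDFReal 0 1 (x j))) := by
  refine Measure.pi_eq (μ := fun _ : Fin m => γ) fun s hs => ?_
  rw [withDensity_apply _ (MeasurableSet.univ_pi fun i => hs i),
    ← lintegral_indicator (MeasurableSet.univ_pi fun i => hs i)]
  have hpt : ∀ x : Fin m → ℝ,
      (Set.univ.pi s).indicator (fun x => ∏ j, ENNReal.ofReal (gaussianPDFReal 0 1 (x j))) x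
        = ∏ j, (s j).indicator (fun t => ENNReal.ofReal (gaussianPDFReal 0 1 t)) (x j) := by
    intro x
    by_cases hx : x ∈ Set.univ.pi s
    · rw [Set.indicator_of_mem hx]
      exact Finset.prod_congr rfl fun j _ =>
        (Set.indicator_of_mem (hx j (Set.mem_univ j)) (fun t => ENNReal.ofReal (gaussianPDFReal 0 1 t))).symm
    · rw [Set.indicator_of_notMem hx]
      rw [Set.mem_univ_pi] at hx
      push_neg at hx
      obtain ⟨j, hj⟩ := hx
      exact (Finset.prod_eq_zero (Finset.mem_univ j)
        (by rw [Set.indicator_of_notMem hj])).symm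
  simp_rw [hpt]
  rw [volume_pi, lint_pi _ _ (fun j => (Measurable.ennreal_ofReal
    (measurable_gaussianPDFReal 0 1)).indicator (hs j))]
  refine Finset.prod_congr rfl fun j _ => ?_
  rw [lintegral_indicator (hs j), gaussianReal_apply 0 one_ne_zero (s j)]
  rfl

/-- pushing a density through a measurable equivalence -/
lemma map_withDensity_equiv {α β : Type*} [MeasurableSpace α] [MeasurableSpace β]
    (e : α ≃ᵐ β) (μ : Measure α) (D : β → ℝ≥0∞) (hD : Measurable D) :
    Measure.map e (μ.withDensity (fun a => D (e a)))
      = (Measure.map e μ).withDensity D := by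
  ext s hs
  rw [Measure.map_apply e.measurable hs, withDensity_apply _ hs,
    withDensity_apply _ (e.measurable hs), setLIntegral_map hs hD e.measurable]


variable {m : ℕ}

/-- the euclidean-space density -/
def DE (m : ℕ) : EuclideanSpace ℝ (Fin m) → ℝ≥0∞ :=
  fun x => ENNReal.ofReal ((√(2 * π))⁻¹ ^ m * rexp (-(1/2) * ‖x‖ ^ 2))

lemma measurable_DE : Measurable (DE m) := by
  have hc : Continuous fun x : EuclideanSpace ℝ (Fin m) =>
      (√(2 * π))⁻¹ ^ m * rexp (-(1/2) * ‖x‖ ^ 2) :=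
    continuous_const.mul (Real.continuous_exp.comp
      (continuous_const.mul ((continuous_pow 2).comp continuous_norm)))
  exact hc.measurable.ennreal_ofReal

/-- the gaussian measure on euclidean space -/
def γE (m : ℕ) : Measure (EuclideanSpace ℝ (Fin m)) :=
  Measure.map ((MeasurableEquiv.toLp 2 (Fin m → ℝ)).symm).symm
    (Measure.pi fun _ : Fin m => γ)

lemma γE_eq : γE m = (volume : Measure (EuclideanSpace ℝ (Fin m))).withDensity (DE m) := by
  rw [γE, pi_gauss_withDensity m]
  have hD : ∀ g : Fin m → ℝ,
      (∏ j, ENNReal.ofReal (gaussianPDFReal 0 1 (g j)))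
        = DE m (((MeasurableEquiv.toLp 2 (Fin m → ℝ)).symm).symm g) := by
    intro g
    have hcoord : ∀ j, (((MeasurableEquiv.toLp 2 (Fin m → ℝ)).symm).symm g) j = g j := fun j => rfl
    have hnorm : ‖((MeasurableEquiv.toLp 2 (Fin m → ℝ)).symm).symm g‖ ^ 2 = ∑ j, (g j) ^ 2 := by
      rw [EuclideanSpace.norm_eq, Real.sq_sqrt (by positivity)]
      exact Finset.sum_congr rfl fun j _ => by rw [hcoord, Real.norm_eq_abs, sq_abs]
    rw [DE, hnorm]
    rw [← ENNReal.ofReal_prod_of_nonneg (fun j _ => gaussianPDFReal_nonneg 0 1 (g j))]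
    congr 1
    simp_rw [pdf_eq]
    rw [Finset.prod_mul_distrib, Finset.prod_const, Finset.card_univ, Fintype.card_fin,
      ← Real.exp_sum, Finset.mul_sum]
  simp_rw [hD]
  rw [map_withDensity_equiv _ _ _ measurable_DE,
    (MeasurePreserving.symm _ (EuclideanSpace.volume_preserving_symm_measurableEquiv_toLp (Fin m))).map_eq]

/-- rotation invariance of the euclidean gaussian -/
lemma map_isometry_γE (f : EuclideanSpace ℝ (Fin m) ≃ₗᵢ[ℝ] EuclideanSpace ℝ (Fin m)) :
    Measure.map f (γE m) = γE m := by
  let e' : EuclideanSpace ℝ (Fin m) ≃ᵐ EuclideanSpace ℝ (Fin m) :=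
    f.toHomeomorph.toMeasurableEquiv
  have hfun : (⇑e' : _ → _) = ⇑f := rfl
  have hDE : ∀ x, DE m (e' x) = DE m x := by
    intro x
    show DE m (f x) = DE m x
    simp only [DE, f.norm_map]
  rw [γE_eq, ← hfun]
  calc Measure.map e' (volume.withDensity (DE m))
      = Measure.map e' (volume.withDensity (fun x => DE m (e' x))) := by simp_rw [hDE]
    _ = (Measure.map e' volume).withDensity (DE m) :=
        map_withDensity_equiv e' volume (DE m) measurable_DE
    _ = volume.withDensity (DE m) := by
        rw [show Measure.map (⇑e') (volume : Measure (EuclideanSpace ℝ (Fin m))) = volume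
          from f.measurePreserving.map_eq]


variable {m : ℕ}

lemma map_eval (i : Fin m) :
    Measure.map (fun g : Fin m → ℝ => g i) (Measure.pi fun _ : Fin m => γ) = γ := by
  ext s hs
  rw [Measure.map_apply (measurable_pi_apply i) hs]
  have : (fun g : Fin m → ℝ => g i) ⁻¹' s
      = Set.univ.pi (fun l => if l = i then s else Set.univ) := by
    ext g
    simp only [Set.mem_preimage, Set.mem_univ_pi]
    constructor
    · intro h l; split_ifs with hl
      · subst hl; exact h
      · trivial
    · intro h; have := h i; simpa using this
  rw [this, Measure.pi_pi]
  rw [Finset.prod_eq_single_of_mem i (Finset.mem_univ i)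
    (fun l _ hl => by simp [hl])]
  simp

lemma map_pair {j k : Fin m} (hjk : j ≠ k) :
    Measure.map (fun g : Fin m → ℝ => (g j, g k)) (Measure.pi fun _ : Fin m => γ)
      = γ.prod γ := by
  refine (Measure.prod_eq fun s t hs ht => ?_).symm
  rw [Measure.map_apply ((measurable_pi_apply j).prodMk (measurable_pi_apply k)) (hs.prod ht)]
  have : (fun g : Fin m → ℝ => (g j, g k)) ⁻¹' (s ×ˢ t)
      = Set.univ.pi (fun l => if l = j then s else if l = k then t else Set.univ) := by
    ext g
    simp only [Set.mem_preimage, Set.mem_prod, Set.mem_univ_pi]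
    constructor
    · rintro ⟨h1, h2⟩ l
      split_ifs with hl1 hl2
      · subst hl1; exact h1
      · subst hl2; exact h2
      · trivial
    · intro h
      refine ⟨?_, ?_⟩
      · have := h j; simpa using this
      · have := h k; simpa [hjk.symm] using this
  rw [this, Measure.pi_pi]
  rw [← Finset.prod_subset (Finset.subset_univ {j, k})
    (fun l _ hl => ?_)]
  · rw [Finset.prod_pair hjk]
    simp [hjk, if_neg hjk.symm]
  · simp only [Finset.mem_insert, Finset.mem_singleton, not_or] at hl
    simp [hl.1, hl.2]

/-- the key rotation identity -/
lemma rotation (hm2 : 2 ≤ m) (a b : EuclideanSpace ℝ (Fin m))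
    (ha : @inner ℝ _ _ a a = 1) (hb : @inner ℝ _ _ b b = 1) (hab : @inner ℝ _ _ a b = 0)
    (F : ℝ × ℝ → ℝ) (hF : Measurable F) :
    ∫ g : Fin m → ℝ,
        F (@inner ℝ _ _ a (((MeasurableEquiv.toLp 2 (Fin m → ℝ)).symm).symm g),
           @inner ℝ _ _ b (((MeasurableEquiv.toLp 2 (Fin m → ℝ)).symm).symm g))
        ∂(Measure.pi fun _ : Fin m => γ)
      = ∫ z, F z ∂(γ.prod γ) := by
  classical
  haveI : NeZero m := ⟨by omega⟩
  have h01 : (0 : Fin m) ≠ (1 : Fin m) := by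
    intro h
    have h' := congrArg Fin.val h
    rw [show ((0:Fin m)).val = 0 from rfl, show ((1:Fin m)).val = 1 % m from rfl] at h'
    have hmod : 1 % m = 1 := Nat.mod_eq_of_lt (by omega)
    omega
  -- build an orthonormal basis starting with a, b
  set v : Fin m → EuclideanSpace ℝ (Fin m) := fun l => if l = 0 then a else b with hv
  have hv0 : v 0 = a := by simp [hv]
  have hv1 : v 1 = b := by simp [hv, h01.symm]
  have hvon : Orthonormal ℝ (Set.restrict {0, 1} v) := by
    rw [orthonormal_iff_ite]
    rintro ⟨p, hp⟩ ⟨r, hr⟩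
    simp only [Set.mem_insert_iff, Set.mem_singleton_iff] at hp hr
    simp only [Set.restrict_apply, Set.restrict, Subtype.mk.injEq]
    rcases hp with rfl | rfl <;> rcases hr with rfl | rfl
    · rw [hv0, if_pos rfl]; exact ha
    · rw [hv0, hv1, if_neg h01]; exact hab
    · rw [hv0, hv1, if_neg h01.symm, real_inner_comm]; exact hab
    · rw [hv1, if_pos rfl]; exact hb
  obtain ⟨B, hB⟩ := hvon.exists_orthonormalBasis_extension_of_card_eq
    (by simp [finrank_euclideanSpace_fin])
  have hB0 : B 0 = a := by rw [hB 0 (by simp), hv0]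
  have hB1 : B 1 = b := by rw [hB 1 (by simp), hv1]
  -- the chain of integrals
  set e := (MeasurableEquiv.toLp 2 (Fin m → ℝ)).symm
  have hmap1 : Measure.pi (fun _ : Fin m => γ) = Measure.map e (γE m) := by
    rw [γE, Measure.map_map e.measurable e.symm.measurable]
    simp
  have hFmeas2 : Measurable fun y : EuclideanSpace ℝ (Fin m) => F (y 0, y 1) := by
    refine hF.comp ?_
    exact ((measurable_pi_apply 0).comp e.measurable).prodMk
      ((measurable_pi_apply 1).comp e.measurable)
  have hFmeas1 : Measurable fun x : EuclideanSpace ℝ (Fin m) =>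
      F (@inner ℝ _ _ a x, @inner ℝ _ _ b x) := by
    refine hF.comp (Measurable.prodMk ?_ ?_) <;>
      exact (Continuous.inner continuous_const continuous_id).measurable
  calc ∫ g : Fin m → ℝ, F (@inner ℝ _ _ a (e.symm g), @inner ℝ _ _ b (e.symm g))
          ∂(Measure.pi fun _ : Fin m => γ)
      = ∫ x, F (@inner ℝ _ _ a x, @inner ℝ _ _ b x) ∂(γE m) := by
        have h := integral_map (φ := ⇑e) (μ := γE m) e.measurable.aemeasurable
          (f := fun g : Fin m → ℝ =>
            F (@inner ℝ _ _ a (e.symm g), @inner ℝ _ _ b (e.symm g)))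
          ((hFmeas1.comp e.symm.measurable).aestronglyMeasurable)
        rw [hmap1]
        rw [h]
        simp only [MeasurableEquiv.symm_apply_apply]
    _ = ∫ x, F (B.repr x 0, B.repr x 1) ∂(γE m) := by
        simp_rw [B.repr_apply_apply, hB0, hB1]
    _ = ∫ y, F (y 0, y 1) ∂(γE m) := by
        have h := integral_map (φ := ⇑B.repr) (μ := γE m)
          B.repr.continuous.measurable.aemeasurable
          (f := fun y : EuclideanSpace ℝ (Fin m) => F (y 0, y 1))
          (by rw [map_isometry_γE B.repr]; exact hFmeas2.aestronglyMeasurable)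
        rw [map_isometry_γE B.repr] at h
        exact h.symm
    _ = ∫ g : Fin m → ℝ, F (g 0, g 1) ∂(Measure.pi fun _ : Fin m => γ) := by
        have h := integral_map (φ := ⇑e) (μ := γE m) e.measurable.aemeasurable
          (f := fun g : Fin m → ℝ => F (g 0, g 1))
          ((hF.comp ((measurable_pi_apply 0).prodMk
            (measurable_pi_apply 1))).aestronglyMeasurable)
        rw [hmap1, h]
        rfl
    _ = ∫ z, F z ∂(γ.prod γ) := by
        have h := integral_map (φ := fun g : Fin m → ℝ => (g 0, g 1))
          (μ := Measure.pi fun _ : Fin m => γ)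
          ((measurable_pi_apply 0).prodMk (measurable_pi_apply 1)).aemeasurable
          (f := F) (by rw [map_pair h01]; exact hF.aestronglyMeasurable)
        rw [map_pair h01] at h
        exact h.symm


lemma inner_toE {m : ℕ} (x y : Fin m → ℝ) :
    @inner ℝ _ _ (((MeasurableEquiv.toLp 2 (Fin m → ℝ)).symm).symm x)
      (((MeasurableEquiv.toLp 2 (Fin m → ℝ)).symm).symm y) = ∑ j, x j * y j := by
  simp [PiLp.inner_apply, RCLike.inner_apply]
  exact Finset.sum_congr rfl fun j _ => mul_comm _ _


end GaussAux

end

open GaussAux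

/-- For `u ∈ S^{m−1}`, `q > −1` and a standard Gaussian vector `g` in `ℝ^m`,
`E[|⟨g,u⟩|^q g_i²] = (1 + q u_i²) · 2^{q/2} Γ((q+1)/2)/√π`. -/
theorem gaussian_power_times_square_moment (m : ℕ) (hm : 1 ≤ m) (q : ℝ) (hq : -1 < q)
    (u : Fin m → ℝ) (hu : ∑ j, u j ^ 2 = 1) (i : Fin m) :
    ∫ g : Fin m → ℝ,
        |∑ j, g j * u j| ^ q * (g i) ^ 2
        ∂(Measure.pi fun _ : Fin m => gaussianReal 0 1) =
      (1 + q * u i ^ 2) * (2 ^ (q / 2) * Real.Gamma ((q + 1) / 2) / Real.sqrt Real.pi) := by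
  classical
  by_cases hci : u i ^ 2 = 1
  · -- degenerate case : u = ± eᵢ
    have habs : |u i| = 1 := by rw [← Real.sqrt_sq_eq_abs, hci, Real.sqrt_one]
    have hz : ∀ j, j ≠ i → u j = 0 := by
      intro j hj
      have h1 : ∑ l ∈ Finset.univ.erase i, u l ^ 2 = 0 := by
        rw [← Finset.add_sum_erase _ _ (Finset.mem_univ i)] at hu
        linarith
      have h2 := (Finset.sum_eq_zero_iff_of_nonneg
        (fun l _ => sq_nonneg (u l))).mp h1 j (Finset.mem_erase.mpr ⟨hj, Finset.mem_univ j⟩)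
      exact pow_eq_zero_iff (by norm_num) |>.mp h2
    have hpt : ∀ g : Fin m → ℝ, |∑ j, g j * u j| ^ q * (g i) ^ 2
        = |g i| ^ q * (g i) ^ 2 := by
      intro g
      have : ∑ j, g j * u j = g i * u i :=
        Finset.sum_eq_single i (fun j _ hj => by rw [hz j hj, mul_zero])
          (fun h => absurd (Finset.mem_univ i) h)
      rw [this, abs_mul, habs, mul_one]
    calc ∫ g : Fin m → ℝ, |∑ j, g j * u j| ^ q * (g i) ^ 2
            ∂(Measure.pi fun _ : Fin m => gaussianReal 0 1)
        = ∫ g : Fin m → ℝ, |g i| ^ q * (g i) ^ 2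
            ∂(Measure.pi fun _ : Fin m => γ) :=
          integral_congr_ae (Filter.Eventually.of_forall fun g => hpt g)
      _ = ∫ x, |x| ^ q * x ^ 2 ∂γ := by
          have h := integral_map (φ := fun g : Fin m → ℝ => g i)
            (μ := Measure.pi fun _ : Fin m => γ)
            (measurable_pi_apply i).aemeasurable
            (f := fun x : ℝ => |x| ^ q * x ^ 2)
            (by rw [map_eval i]
                exact ((measurable_abs.pow_const q).mul
                  (measurable_id.pow_const 2)).aestronglyMeasurable)
          rw [map_eval i] at h
          exact h.symm
      _ = (1 + q * u i ^ 2) * (2 ^ (q / 2) * Real.Gamma ((q + 1) / 2) / √π) := by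
          rw [integral_abs_rpow_mul_sq hq, hci]
          ring
  · -- main case
    have hc2 : u i ^ 2 ≤ 1 := by
      rw [← hu]
      exact Finset.single_le_sum (f := fun j => u j ^ 2)
        (fun j _ => sq_nonneg (u j)) (Finset.mem_univ i)
    have hlt : u i ^ 2 < 1 := lt_of_le_of_ne hc2 hci
    have hm2 : 2 ≤ m := by
      by_contra h
      have hm1 : m = 1 := by omega
      subst hm1
      have hi : i = 0 := Subsingleton.elim i 0
      rw [Fin.sum_univ_one] at hu
      rw [hi, hu] at hlt
      exact lt_irrefl 1 hlt
    set c : ℝ := u i with hc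
    set s : ℝ := Real.sqrt (1 - c ^ 2) with hsdef
    have hs2 : s ^ 2 = 1 - c ^ 2 := Real.sq_sqrt (by linarith)
    have hs0 : 0 < s := Real.sqrt_pos.mpr (by linarith)
    set w : Fin m → ℝ := fun j => s⁻¹ * ((if j = i then (1:ℝ) else 0) - c * u j) with hw
    -- sums
    have hsum_uu : ∑ j, u j * u j = 1 := by
      rw [← hu]; exact Finset.sum_congr rfl fun j _ => (sq (u j)).symm
    have hsum_uw : ∀ x : Fin m → ℝ,
        ∑ j, w j * x j = s⁻¹ * (x i - c * ∑ j, u j * x j) := by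
      intro x
      have : ∀ j, w j * x j
          = s⁻¹ * ((if j = i then x j else 0) - c * (u j * x j)) := by
        intro j
        by_cases hj : j = i
        · subst hj; simp only [hw, eq_self_iff_true, if_true]; ring
        · simp only [hw, if_neg hj]; ring
      simp_rw [this, ← Finset.mul_sum, Finset.sum_sub_distrib, ← Finset.mul_sum,
        Finset.sum_ite_eq' Finset.univ i x]
      simp
    have hab : ∑ j, u j * w j = 0 := by
      have h1 : ∀ j, u j * w j = w j * u j := fun j => mul_comm _ _
      simp_rw [h1, hsum_uw u, hsum_uu]
      simp [hc]
    have hsum_ux : ∀ x : Fin m → ℝ,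
        ∑ j, u j * x j = (∑ j, x j * u j) := fun x =>
      Finset.sum_congr rfl fun j _ => mul_comm _ _
    have hbb : ∑ j, w j * w j = 1 := by
      rw [hsum_uw w]
      have hwi : w i = s⁻¹ * (1 - c * c) := by
        simp only [hw, eq_self_iff_true, if_true, ← hc]
      have huw : ∑ j, u j * w j = 0 := hab
      rw [hwi, huw]
      have : s⁻¹ * (s⁻¹ * (1 - c * c) - c * 0) = s⁻¹ * s⁻¹ * (1 - c ^ 2) := by ring
      rw [this, ← hs2]
      field_simp
    -- orthonormality in euclidean space
    have hsne : s ≠ 0 := hs0.ne'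
    have ha' : @inner ℝ _ _ (((MeasurableEquiv.toLp 2 (Fin m → ℝ)).symm).symm u)
        (((MeasurableEquiv.toLp 2 (Fin m → ℝ)).symm).symm u) = 1 := by
      rw [inner_toE]; exact hsum_uu
    have hb' : @inner ℝ _ _ (((MeasurableEquiv.toLp 2 (Fin m → ℝ)).symm).symm w)
        (((MeasurableEquiv.toLp 2 (Fin m → ℝ)).symm).symm w) = 1 := by
      rw [inner_toE]; exact hbb
    have hab' : @inner ℝ _ _ (((MeasurableEquiv.toLp 2 (Fin m → ℝ)).symm).symm u)
        (((MeasurableEquiv.toLp 2 (Fin m → ℝ)).symm).symm w) = 0 := by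
      rw [inner_toE]; exact hab
    set F : ℝ × ℝ → ℝ := fun z => |z.1| ^ q * (c * z.1 + s * z.2) ^ 2 with hFdef
    have hF : Measurable F :=
      (measurable_fst.abs.pow_const q).mul
        (((measurable_fst.const_mul c).add (measurable_snd.const_mul s)).pow_const 2)
    have hpt : ∀ g : Fin m → ℝ,
        F (@inner ℝ _ _ (((MeasurableEquiv.toLp 2 (Fin m → ℝ)).symm).symm u)
              (((MeasurableEquiv.toLp 2 (Fin m → ℝ)).symm).symm g),
           @inner ℝ _ _ (((MeasurableEquiv.toLp 2 (Fin m → ℝ)).symm).symm w)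
              (((MeasurableEquiv.toLp 2 (Fin m → ℝ)).symm).symm g))
          = |∑ j, g j * u j| ^ q * (g i) ^ 2 := by
      intro g
      have hXY : c * (∑ j, u j * g j)
          + s * (s⁻¹ * (g i - c * ∑ j, u j * g j)) = g i := by
        field_simp
        ring
      calc F (@inner ℝ _ _ (((MeasurableEquiv.toLp 2 (Fin m → ℝ)).symm).symm u)
              (((MeasurableEquiv.toLp 2 (Fin m → ℝ)).symm).symm g),
           @inner ℝ _ _ (((MeasurableEquiv.toLp 2 (Fin m → ℝ)).symm).symm w)
              (((MeasurableEquiv.toLp 2 (Fin m → ℝ)).symm).symm g))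
          = |∑ j, u j * g j| ^ q * (c * (∑ j, u j * g j)
              + s * (s⁻¹ * (g i - c * ∑ j, u j * g j))) ^ 2 := by
            rw [inner_toE, inner_toE, hsum_uw g]
        _ = |∑ j, g j * u j| ^ q * (g i) ^ 2 := by
            rw [hXY, hsum_ux g]
    -- apply the rotation lemma and compute the 2d integral
    calc ∫ g : Fin m → ℝ, |∑ j, g j * u j| ^ q * (g i) ^ 2
            ∂(Measure.pi fun _ : Fin m => gaussianReal 0 1)
        = ∫ g : Fin m → ℝ,
            F (@inner ℝ _ _ (((MeasurableEquiv.toLp 2 (Fin m → ℝ)).symm).symm u)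
                  (((MeasurableEquiv.toLp 2 (Fin m → ℝ)).symm).symm g),
               @inner ℝ _ _ (((MeasurableEquiv.toLp 2 (Fin m → ℝ)).symm).symm w)
                  (((MeasurableEquiv.toLp 2 (Fin m → ℝ)).symm).symm g))
            ∂(Measure.pi fun _ : Fin m => γ) :=
          (integral_congr_ae (Filter.Eventually.of_forall fun g => (hpt g).symm))
      _ = ∫ z, F z ∂(γ.prod γ) := rotation hm2 _ _ ha' hb' hab' F hF
      _ = ∫ z : ℝ × ℝ, ((fun x => c ^ 2 * (|x| ^ q * x ^ 2)) z.1 * (fun _y => (1:ℝ)) z.2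
            + ((fun x => (2 * c * s) * (|x| ^ q * x)) z.1 * (fun y => y) z.2
              + (fun x => s ^ 2 * |x| ^ q) z.1 * (fun y => y ^ 2) z.2)) ∂(γ.prod γ) := by
          refine integral_congr_ae (Filter.Eventually.of_forall fun z => ?_)
          show |z.1| ^ q * (c * z.1 + s * z.2) ^ 2 = _
          simp only []
          ring
      _ = (∫ x, c ^ 2 * (|x| ^ q * x ^ 2) ∂γ) * (∫ _y, (1:ℝ) ∂γ)
            + ((∫ x, (2 * c * s) * (|x| ^ q * x) ∂γ) * (∫ y, y ∂γ)
              + (∫ x, s ^ 2 * |x| ^ q ∂γ) * (∫ y, y ^ 2 ∂γ)) := by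
          have hInt1 : Integrable (fun z : ℝ × ℝ =>
              (fun x => c ^ 2 * (|x| ^ q * x ^ 2)) z.1 * (fun _y => (1:ℝ)) z.2) (γ.prod γ) :=
            Integrable.mul_prod ((integrable_abs_rpow_mul_sq hq).const_mul _)
              (integrable_const 1)
          have hInt2 : Integrable (fun z : ℝ × ℝ =>
              (fun x => (2 * c * s) * (|x| ^ q * x)) z.1 * (fun y => y) z.2) (γ.prod γ) :=
            Integrable.mul_prod ((integrable_abs_rpow_mul_self hq).const_mul _)
              integrable_id_gauss
          have hInt3 : Integrable (fun z : ℝ × ℝ =>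
              (fun x => s ^ 2 * |x| ^ q) z.1 * (fun y => y ^ 2) z.2) (γ.prod γ) :=
            Integrable.mul_prod ((integrable_abs_rpow hq).const_mul _)
              integrable_sq_gauss
          have hInt23 : Integrable (fun z : ℝ × ℝ =>
              (fun x => (2 * c * s) * (|x| ^ q * x)) z.1 * (fun y => y) z.2
              + (fun x => s ^ 2 * |x| ^ q) z.1 * (fun y => y ^ 2) z.2) (γ.prod γ) :=
            hInt2.add hInt3
          rw [integral_add hInt1 hInt23, integral_add hInt2 hInt3]
          rw [integral_prod_mul (f := fun x => c ^ 2 * (|x| ^ q * x ^ 2)) (g := fun _y => (1:ℝ)),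
            integral_prod_mul (f := fun x => (2 * c * s) * (|x| ^ q * x)) (g := fun y => y),
            integral_prod_mul (f := fun x => s ^ 2 * |x| ^ q) (g := fun y => y ^ 2)]
      _ = (1 + q * u i ^ 2) * (2 ^ (q / 2) * Real.Gamma ((q + 1) / 2) / √π) := by
          rw [integral_const_mul, integral_const_mul, integral_const_mul,
            integral_abs_rpow_mul_sq hq, integral_abs_rpow_mul_self q,
            integral_abs_rpow hq, integral_id_gauss, integral_sq_gauss]
          have h1 : ∫ _y : ℝ, (1:ℝ) ∂γ = 1 := by
            simp [integral_const]
          rw [h1, hs2]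
          ring
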